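/- The function y = η(τ)^{-2}, where η is the Dedekind eta function, satisfies the differential equation y'' + (π²/36)·E₄(τ)·y = 0 on the upper half-plane, given the Ramanujan identity (1/(2πi))E₂' = (E₂² - E₄)/12 and the logarithmic derivative identity η'/η = (πi/12)E₂. -/

import Mathlib

open Complex

/-- The Dedekind eta function `η(τ) = q^{1/24} ∏_{n≥1} (1 - qⁿ)`, `q = exp(2πiτ)`. -/
noncomputable def dedekindEta (τ : ℂ) : ℂ :=
  Complex.exp (Real.pi * Complex.I * τ / 12) *
    ∏' n : ℕ, (1 - Complex.exp (2 * Real.pi * Complex.I * τ) ^ (n + 1))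

/-- The weight 2 Eisenstein series `E₂(τ) = 1 - 24 ∑_{n≥1} σ₁(n) qⁿ`. -/
noncomputable def Eis₂ (τ : ℂ) : ℂ :=
  1 - 24 * ∑' n : ℕ, (ArithmeticFunction.sigma 1 (n + 1) : ℂ) *
    Complex.exp (2 * Real.pi * Complex.I * τ) ^ (n + 1)

/-- The weight 4 Eisenstein series `E₄(τ) = 1 + 240 ∑_{n≥1} σ₃(n) qⁿ`. -/
noncomputable def Eis₄ (τ : ℂ) : ℂ :=
  1 + 240 * ∑' n : ℕ, (ArithmeticFunction.sigma 3 (n + 1) : ℂ) *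
    Complex.exp (2 * Real.pi * Complex.I * τ) ^ (n + 1)

theorem stmt_6 (Ω : Set ℂ) (hΩ : Ω = {z : ℂ | 0 < z.im})
    (hη : AnalyticOn ℂ dedekindEta Ω)
    (hηne : ∀ τ ∈ Ω, dedekindEta τ ≠ 0)
    (hlog : ∀ τ ∈ Ω, deriv dedekindEta τ / dedekindEta τ =
      Real.pi * Complex.I / 12 * Eis₂ τ)
    (hRamanujan : ∀ τ ∈ Ω,
      1 / (2 * Real.pi * Complex.I) * deriv Eis₂ τ = (Eis₂ τ ^ 2 - Eis₄ τ) / 12) :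
    ∀ τ ∈ Ω,
      deriv (deriv fun t => 1 / dedekindEta t ^ 2) τ
        + Real.pi ^ 2 / 36 * Eis₄ τ * (1 / dedekindEta τ ^ 2) = 0 := by
  have hΩo : IsOpen Ω := by
    rw [hΩ]; exact isOpen_lt continuous_const Complex.continuous_im
  have hηnhd : AnalyticOnNhd ℂ dedekindEta Ω := (hΩo.analyticOn_iff_analyticOnNhd).mp hη
  have hη'nhd : AnalyticOnNhd ℂ (deriv dedekindEta) Ω := hηnhd.deriv
  have hπI : (Real.pi : ℂ) * Complex.I ≠ 0 :=
    mul_ne_zero (Complex.ofReal_ne_zero.mpr Real.pi_ne_zero) Complex.I_ne_zero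
  -- derivative of η in terms of E₂
  have hη' : ∀ t ∈ Ω, deriv dedekindEta t =
      Real.pi * Complex.I / 12 * Eis₂ t * dedekindEta t := fun t ht =>
    (div_eq_iff (hηne t ht)).mp (hlog t ht)
  -- first derivative of y = 1/η²
  have hy' : ∀ t ∈ Ω, deriv (fun t => 1 / dedekindEta t ^ 2) t =
      -(Real.pi * Complex.I / 6) * Eis₂ t * (1 / dedekindEta t ^ 2) := by
    intro t ht
    have hd : DifferentiableAt ℂ dedekindEta t := (hηnhd t ht).differentiableAt
    have hsq : HasDerivAt (fun s => dedekindEta s ^ 2)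
        (2 * dedekindEta t ^ 1 * deriv dedekindEta t) t := hd.hasDerivAt.pow 2
    have hne2 : dedekindEta t ^ 2 ≠ 0 := pow_ne_zero 2 (hηne t ht)
    have hinv : HasDerivAt (fun s => (dedekindEta s ^ 2)⁻¹)
        (-(2 * dedekindEta t ^ 1 * deriv dedekindEta t) / (dedekindEta t ^ 2) ^ 2) t :=
      hsq.inv hne2
    have : deriv (fun s => 1 / dedekindEta s ^ 2) t =
        -(2 * dedekindEta t ^ 1 * deriv dedekindEta t) / (dedekindEta t ^ 2) ^ 2 := by
      simpa only [one_div] using hinv.deriv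
    rw [this, hη' t ht]
    field_simp [hηne t ht]
    ring
  -- E₂ is differentiable at points of Ω
  have hE₂diff : ∀ t ∈ Ω, DifferentiableAt ℂ Eis₂ t := by
    intro t ht
    have heq : Eis₂ =ᶠ[nhds t]
        (fun s => 12 / (Real.pi * Complex.I) * (deriv dedekindEta s / dedekindEta s)) := by
      filter_upwards [hΩo.mem_nhds ht] with s hs
      rw [hlog s hs]
      field_simp
    have hd : DifferentiableAt ℂ
        (fun s => 12 / (Real.pi * Complex.I) * (deriv dedekindEta s / dedekindEta s)) t :=
      (((hη'nhd t ht).differentiableAt).div ((hηnhd t ht).differentiableAt)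
        (hηne t ht)).const_mul _
    exact hd.congr_of_eventuallyEq heq
  intro τ hτ
  have hmem : Ω ∈ nhds τ := hΩo.mem_nhds hτ
  -- y is differentiable at τ
  have hyd : DifferentiableAt ℂ (fun t => 1 / dedekindEta t ^ 2) τ := by
    simp only [one_div]
    exact (((hηnhd τ hτ).differentiableAt).pow 2).inv (pow_ne_zero 2 (hηne τ hτ))
  -- rewrite the second derivative
  have h2 : deriv (deriv fun t => 1 / dedekindEta t ^ 2) τ =
      deriv (fun t => -(Real.pi * Complex.I / 6) * (Eis₂ t * (1 / dedekindEta t ^ 2))) τ := by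
    apply Filter.EventuallyEq.deriv_eq
    filter_upwards [hmem] with s hs
    rw [hy' s hs]; ring
  rw [h2]
  have hprod : HasDerivAt (fun t => -(Real.pi * Complex.I / 6) *
      (Eis₂ t * (1 / dedekindEta t ^ 2)))
      (-(Real.pi * Complex.I / 6) * (deriv Eis₂ τ * (1 / dedekindEta τ ^ 2) +
        Eis₂ τ * deriv (fun t => 1 / dedekindEta t ^ 2) τ)) τ :=
    (((hE₂diff τ hτ).hasDerivAt.mul hyd.hasDerivAt)).const_mul _
  rw [hprod.deriv, hy' τ hτ]
  have hE₂' : deriv Eis₂ τ = 2 * Real.pi * Complex.I * ((Eis₂ τ ^ 2 - Eis₄ τ) / 12) := by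
    have := hRamanujan τ hτ
    field_simp [Real.pi_ne_zero, Complex.I_ne_zero] at this ⊢
    linear_combination this
  rw [hE₂']
  have hI : (Complex.I : ℂ) ^ 2 = -1 := Complex.I_sq
  field_simp [hηne τ hτ]
  ring_nf
  rw [show (Complex.I : ℂ) ^ 2 = -1 from Complex.I_sq]
  ring
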